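/- For all integers k ≥ 0 and j ≥ 0, the sum ∑_{l=0}^{j} (-1)^l * C(j,l) * (l+1) / ((l+3)(k+l+4)) equals (k+3) / ((k+1)(k+4) * C(k+j+4, j)) − 2 / (3*(k+1) * C(j+3, j)). -/

import Mathlib

lemma aux9 (j : ℕ) : ∀ x : ℚ, 0 < x →
    ∑ l ∈ Finset.range (j + 1), (-1:ℚ)^l * (j.choose l) / (x + l) =
      (j.factorial : ℚ) / ∏ i ∈ Finset.range (j + 1), (x + i) := by
  induction j with
  | zero => intro x hx; simp
  | succ j ih =>
    intro x hx
    have hx1 : (0:ℚ) < x + 1 := by linarith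
    have hP : (0:ℚ) < ∏ i ∈ Finset.range (j + 1), (x + i) := by
      apply Finset.prod_pos; intro i _; positivity
    have hQ : (0:ℚ) < ∏ i ∈ Finset.range (j + 1), (x + 1 + i) := by
      apply Finset.prod_pos; intro i _; positivity
    have key : (∑ l ∈ Finset.range (j + 2), (-1:ℚ)^l * ((j+1).choose l) / (x + l))
        + ∑ l ∈ Finset.range (j + 1), (-1:ℚ)^l * (j.choose l) / ((x + 1) + l)
        = ∑ l ∈ Finset.range (j + 1), (-1:ℚ)^l * (j.choose l) / (x + l) := by
      have hext : (∑ l ∈ Finset.range (j+1), (-1:ℚ)^l * (j.choose l) / (x + l))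
          = ∑ l ∈ Finset.range (j+2), (-1:ℚ)^l * (j.choose l) / (x + l) := by
        symm; rw [Finset.sum_range_succ]; simp [Nat.choose_succ_self]
      rw [hext, Finset.sum_range_succ' (fun l => (-1:ℚ)^l * (((j+1).choose l : ℕ) : ℚ) / (x + l)),
        Finset.sum_range_succ' (fun l => (-1:ℚ)^l * (((j).choose l : ℕ) : ℚ) / (x + l))]
      simp only [pow_zero, Nat.choose_zero_right, Nat.cast_one, Nat.cast_zero, add_zero, one_mul]
      rw [add_right_comm, ← Finset.sum_add_distrib]
      congr 1
      apply Finset.sum_congr rfl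
      intro l _
      rw [Nat.choose_succ_succ]
      push_cast
      have h1 : x + (l + 1) ≠ (0:ℚ) := by positivity
      have h2 : x + 1 + l ≠ (0:ℚ) := by positivity
      field_simp
      ring
    have hprod1 : ∏ i ∈ Finset.range (j + 2), (x + i)
        = (∏ i ∈ Finset.range (j + 1), (x + i)) * (x + (j+1)) := by
      rw [Finset.prod_range_succ]; push_cast; ring_nf
    have hprod2 : ∏ i ∈ Finset.range (j + 2), (x + i)
        = x * ∏ i ∈ Finset.range (j + 1), (x + 1 + i) := by
      rw [Finset.prod_range_succ' (fun i => (x + i))]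
      simp only [Nat.cast_zero, add_zero]
      rw [mul_comm]
      congr 1
      apply Finset.prod_congr rfl
      intro i _; push_cast; ring
    have hrel : (∏ i ∈ Finset.range (j + 1), (x + i)) * (x + ((j:ℚ)+1))
        = x * ∏ i ∈ Finset.range (j + 1), (x + 1 + i) := by
      rw [← hprod1, hprod2]
    have hfac : ((j+1).factorial : ℚ) = ((j:ℚ)+1) * j.factorial := by
      push_cast [Nat.factorial_succ]; ring
    have hS : ∑ l ∈ Finset.range (j + 2), (-1:ℚ)^l * ((j+1).choose l) / (x + l)
        = (j.factorial : ℚ) / (∏ i ∈ Finset.range (j + 1), (x + i))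
          - (j.factorial : ℚ) / (∏ i ∈ Finset.range (j + 1), (x + 1 + i)) := by
      rw [← ih x hx]
      have := ih (x+1) hx1
      linarith [key, this]
    push_cast
    rw [hS, hprod1, hfac]
    field_simp
    linear_combination (-1:ℚ) * hrel

lemma prodfac (c : ℕ) : ∀ n : ℕ, ∏ i ∈ Finset.range n, ((c:ℚ) + 1 + i)
    = (((c + n).factorial : ℚ)) / (c.factorial : ℚ) := by
  intro n
  induction n with
  | zero => simp [Nat.factorial_ne_zero]
  | succ n ih =>
    rw [Finset.prod_range_succ, ih]
    have h1 : ((c + (n+1)).factorial : ℚ) = ((c:ℚ) + n + 1) * ((c + n).factorial : ℚ) := by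
      rw [show c + (n+1) = (c + n) + 1 from rfl, Nat.factorial_succ]
      push_cast; ring
    have h2 : ((c.factorial : ℚ)) ≠ 0 := by positivity
    rw [h1]
    field_simp
    ring

theorem stmt9 (k j : ℕ) :
    ∑ l ∈ Finset.range (j + 1),
      (-1 : ℚ) ^ l * (j.choose l) * (l + 1) / ((l + 3) * (k + l + 4)) =
      ((k : ℚ) + 3) / (((k : ℚ) + 1) * (k + 4) * ((k + j + 4).choose j)) -
        2 / (3 * ((k : ℚ) + 1) * ((j + 3).choose j)) := by
  have hk1 : ((k:ℚ) + 1) ≠ 0 := by positivity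
  have hsplit : ∀ l ∈ Finset.range (j + 1),
      (-1 : ℚ) ^ l * (j.choose l) * (l + 1) / (((l:ℚ) + 3) * (k + l + 4))
      = (-2/((k:ℚ)+1)) * ((-1:ℚ)^l * (j.choose l) / ((3:ℚ) + l))
        + (((k:ℚ)+3)/((k:ℚ)+1)) * ((-1:ℚ)^l * (j.choose l) / (((k:ℚ)+4) + l)) := by
    intro l _
    have h1 : ((l:ℚ) + 3) ≠ 0 := by positivity
    have h2 : ((k:ℚ) + (l:ℚ) + 4) ≠ 0 := by positivity
    have h3 : ((3:ℚ) + l) ≠ 0 := by positivity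
    have h4 : ((k:ℚ) + 4 + l) ≠ 0 := by positivity
    field_simp
    ring
  rw [Finset.sum_congr rfl hsplit, Finset.sum_add_distrib, ← Finset.mul_sum, ← Finset.mul_sum]
  rw [aux9 j 3 (by norm_num), aux9 j ((k:ℚ)+4) (by positivity)]
  have hp3 : (∏ i ∈ Finset.range (j + 1), ((3:ℚ) + i)) = ((j+3).factorial : ℚ) / 2 := by
    have := prodfac 2 (j+1)
    simp only [Nat.cast_ofNat] at this
    rw [show (3:ℚ) = (2:ℚ) + 1 by norm_num]
    rw [show ((2:ℚ):ℚ) = ((2:ℕ):ℚ) by norm_num] at *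
    rw [this]
    norm_num [show (2:ℕ) + (j+1) = j + 3 by omega]
  have hpk : (∏ i ∈ Finset.range (j + 1), (((k:ℚ)+4) + i))
      = ((k+j+4).factorial : ℚ) / ((k+3).factorial : ℚ) := by
    have := prodfac (k+3) (j+1)
    push_cast at this
    rw [show (k+3) + (j+1) = k + j + 4 by omega] at this
    rw [← this]
    apply Finset.prod_congr rfl
    intro i _; push_cast; ring
  rw [hp3, hpk]
  have hc1 : (((k + j + 4).choose j : ℕ) : ℚ)
      = ((k+j+4).factorial : ℚ) / ((j.factorial : ℚ) * ((k+4).factorial : ℚ)) := by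
    rw [Nat.cast_choose ℚ (by omega : j ≤ k + j + 4), show k + j + 4 - j = k + 4 by omega]
  have hc2 : (((j + 3).choose j : ℕ) : ℚ)
      = ((j+3).factorial : ℚ) / ((j.factorial : ℚ) * 6) := by
    rw [Nat.cast_choose ℚ (by omega : j ≤ j + 3)]
    norm_num [show j + 3 - j = 3 by omega, Nat.factorial]
  rw [hc1, hc2]
  have hf4 : ((k + 4).factorial : ℚ) = ((k:ℚ) + 4) * ((k+3).factorial : ℚ) := by
    rw [show k + 4 = (k + 3) + 1 from rfl, Nat.factorial_succ]
    push_cast; ring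
  rw [hf4]
  have e1 : ((j.factorial : ℚ)) ≠ 0 := by positivity
  have e2 : (((j+3).factorial : ℚ)) ≠ 0 := by positivity
  have e3 : (((k+3).factorial : ℚ)) ≠ 0 := by positivity
  have e4 : (((k+j+4).factorial : ℚ)) ≠ 0 := by positivity
  have e5 : ((k:ℚ) + 4) ≠ 0 := by positivity
  field_simp
  ring
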